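/- Fix n ≥ 2 and nonnegative integers m, ℓ. Let B_ℓ = { x ∈ (ℤ_{≥0})^n : Σ x_i = ℓ } and B̃_ℓ = { y ∈ (ℤ_{≥0})^{n−1} : Σ y_i ≤ ℓ }, with the bijection γ_ℓ : B_ℓ → B̃_ℓ, (x_1,…,x_n) ↦ (x_2,…,x_n), whose inverse sends (y_1,…,y_{n−1}) to (ℓ − Σ y_i, y_1,…,y_{n−1}). Let R_{mℓ} : B_m × B_ℓ → B_ℓ × B_m be the combinatorial R-matrix, and define R̃_{mℓ} = (γ_ℓ × γ_m) ∘ R_{mℓ} ∘ (γ_m^{−1} × γ_ℓ^{−1}) : B̃_m × B̃_ℓ → B̃_ℓ × B̃_m. Let ι be the reversal map on (n−1)-tuples and ρ̃(a,b) = (ι(b), ι(a)). Then ρ̃ ∘ R̃_{mℓ} ∘ ρ̃ = R̃_{ℓm} as maps on B̃_ℓ × B̃_m. -/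
import Mathlib


/-- `K_i = min_{j=0,…,n−1} ( Σ_{p=1}^{j} w_{i−p} + Σ_{p=j+2}^{n} x_{i−p} )`,
subscripts modulo `n`. -/
def Kfun (n : ℕ) [NeZero n] (w x : ZMod n → ℤ) (i : ZMod n) : ℤ :=
  (Finset.range n).inf' (Finset.nonempty_range_iff.mpr (NeZero.ne n))
    (fun j => (∑ p ∈ Finset.Icc 1 j, w (i - ((p : ℕ) : ZMod n))) +
      ∑ p ∈ Finset.Icc (j + 2) n, x (i - ((p : ℕ) : ZMod n)))

/-- The combinatorial R-matrix: `R(w,x) = (x′,w′)` with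
`x′_i = x_i + K_{i+1} − K_i` and `w′_i = w_i + K_i − K_{i+1}`. -/
def Rmat (n : ℕ) [NeZero n] (wx : (ZMod n → ℤ) × (ZMod n → ℤ)) :
    (ZMod n → ℤ) × (ZMod n → ℤ) :=
  (fun i => wx.2 i + Kfun n wx.1 wx.2 (i + 1) - Kfun n wx.1 wx.2 i,
   fun i => wx.1 i + Kfun n wx.1 wx.2 i - Kfun n wx.1 wx.2 (i + 1))

/-- `γ_ℓ : B_ℓ → B̃_ℓ`, `(x_1,…,x_n) ↦ (x_2,…,x_n)`.  An `(n−1)`-tuple is modelled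
as a function on `ZMod n` whose entries lie on the nonzero classes `1,…,n−1`
and whose (unused) slot at the class `0` is set to `0`. -/
def gammaMap (n : ℕ) (x : ZMod n → ℤ) : ZMod n → ℤ :=
  fun q => if q = 0 then 0 else x (q + 1)

/-- `γ_ℓ⁻¹ : B̃_ℓ → B_ℓ`, `(y_1,…,y_{n−1}) ↦ (ℓ − Σ y_i, y_1,…,y_{n−1})`. -/
def gammaInv (n : ℕ) [NeZero n] (ℓ : ℕ) (y : ZMod n → ℤ) : ZMod n → ℤ :=
  fun i => if i = 1 then (ℓ : ℤ) - ∑ q ∈ Finset.univ.erase (0 : ZMod n), y q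
    else y (i - 1)

/-- `R̃_{mℓ} = (γ_ℓ × γ_m) ∘ R_{mℓ} ∘ (γ_m⁻¹ × γ_ℓ⁻¹) : B̃_m × B̃_ℓ → B̃_ℓ × B̃_m`. -/
def Rtil (n : ℕ) [NeZero n] (m ℓ : ℕ) (ab : (ZMod n → ℤ) × (ZMod n → ℤ)) :
    (ZMod n → ℤ) × (ZMod n → ℤ) :=
  (gammaMap n (Rmat n (gammaInv n m ab.1, gammaInv n ℓ ab.2)).1,
   gammaMap n (Rmat n (gammaInv n m ab.1, gammaInv n ℓ ab.2)).2)

/-- The reversal map `ι` on `(n−1)`-tuples: `ι(a)_p = a_{n−p}`. -/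
def iotaMap (n : ℕ) (a : ZMod n → ℤ) : ZMod n → ℤ := fun q => a (-q)

/-- `ρ̃(a,b) = (ι(b), ι(a))`. -/
def rhoTil (n : ℕ) (ab : (ZMod n → ℤ) × (ZMod n → ℤ)) :
    (ZMod n → ℤ) × (ZMod n → ℤ) :=
  (iotaMap n ab.2, iotaMap n ab.1)

lemma sum_neg_erase {n : ℕ} [NeZero n] (b : ZMod n → ℤ) :
    ∑ q ∈ Finset.univ.erase (0 : ZMod n), b (-q)
      = ∑ q ∈ Finset.univ.erase (0 : ZMod n), b q := by
  refine Finset.sum_nbij' (fun q => -q) (fun q => -q) ?_ ?_ ?_ ?_ ?_ <;>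
    intros <;> simp_all [neg_eq_zero]

lemma gammaInv_iota (n : ℕ) [NeZero n] (ℓ : ℕ) (a : ZMod n → ℤ) :
    gammaInv n ℓ (iotaMap n a) = fun i => gammaInv n ℓ a (2 - i) := by
  funext i
  simp only [gammaInv, iotaMap]
  by_cases hi : i = 1
  · subst hi
    have h21 : (2 : ZMod n) - 1 = 1 := by ring
    rw [h21, if_pos rfl, if_pos rfl, sum_neg_erase]
  · have h2 : (2 : ZMod n) - i ≠ 1 := by
      intro h
      apply hi
      have : i = 2 - 1 := by linear_combination -h
      rw [this]; ring
    rw [if_neg hi, if_neg h2]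
    congr 1
    ring

lemma Kfun_reflect (n : ℕ) [NeZero n] (w x : ZMod n → ℤ) (i : ZMod n) :
    Kfun n (fun t => x (2 - t)) (fun t => w (2 - t)) i = Kfun n w x (3 - i) := by
  have key : ∀ j < n,
      ((∑ p ∈ Finset.Icc 1 (n - 1 - j), x (2 - (i - ((p : ℕ) : ZMod n)))) +
        ∑ p ∈ Finset.Icc (n - 1 - j + 2) n, w (2 - (i - ((p : ℕ) : ZMod n))))
      = (∑ p ∈ Finset.Icc 1 j, w ((3 - i) - ((p : ℕ) : ZMod n))) +
        ∑ p ∈ Finset.Icc (j + 2) n, x ((3 - i) - ((p : ℕ) : ZMod n)) := by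
    intro j hj
    rw [add_comm]
    congr 1
    · refine Finset.sum_nbij' (fun p => n + 1 - p) (fun p => n + 1 - p) ?_ ?_ ?_ ?_ ?_
      · intro p hp
        simp only [Finset.mem_Icc] at hp ⊢
        omega
      · intro p hp
        simp only [Finset.mem_Icc] at hp ⊢
        omega
      · intro p hp
        simp only [Finset.mem_Icc] at hp
        show n + 1 - (n + 1 - p) = p
        omega
      · intro p hp
        simp only [Finset.mem_Icc] at hp
        show n + 1 - (n + 1 - p) = p
        omega
      · intro p hp
        simp only [Finset.mem_Icc] at hp
        congr 1
        rw [Nat.cast_sub (by omega : p ≤ n + 1)]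
        push_cast [ZMod.natCast_self]
        ring
    · refine Finset.sum_nbij' (fun p => n + 1 - p) (fun p => n + 1 - p) ?_ ?_ ?_ ?_ ?_
      · intro p hp
        simp only [Finset.mem_Icc] at hp ⊢
        omega
      · intro p hp
        simp only [Finset.mem_Icc] at hp ⊢
        omega
      · intro p hp
        simp only [Finset.mem_Icc] at hp
        show n + 1 - (n + 1 - p) = p
        omega
      · intro p hp
        simp only [Finset.mem_Icc] at hp
        show n + 1 - (n + 1 - p) = p
        omega
      · intro p hp
        simp only [Finset.mem_Icc] at hp
        congr 1
        rw [Nat.cast_sub (by omega : p ≤ n + 1)]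
        push_cast [ZMod.natCast_self]
        ring
  unfold Kfun
  apply le_antisymm
  · refine Finset.le_inf' _ _ fun j hj => ?_
    have hj' := Finset.mem_range.mp hj
    refine le_trans (Finset.inf'_le _ (Finset.mem_range.mpr
      (show n - 1 - j < n by omega))) (le_of_eq ?_)
    exact key j hj'
  · refine Finset.le_inf' _ _ fun j hj => ?_
    have hj' := Finset.mem_range.mp hj
    have hjj : n - 1 - (n - 1 - j) = j := by omega
    refine le_trans (Finset.inf'_le _ (Finset.mem_range.mpr
      (show n - 1 - j < n by omega))) (le_of_eq ?_)
    have h := key (n - 1 - j) (by omega)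
    rw [hjj] at h
    exact h.symm

/-- `ρ̃ ∘ R̃_{mℓ} ∘ ρ̃ = R̃_{ℓm}` on `B̃_ℓ × B̃_m` (Lemma 7.5 (ii) of the paper). -/
theorem stmt_16 (n : ℕ) [NeZero n] (hn : 2 ≤ n) (m ℓ : ℕ)
    (a b : ZMod n → ℤ)
    (ha0 : a 0 = 0) (ha_nonneg : ∀ q : ZMod n, q ≠ 0 → 0 ≤ a q)
    (ha_sum : ∑ q : ZMod n, a q ≤ (ℓ : ℤ))
    (hb0 : b 0 = 0) (hb_nonneg : ∀ q : ZMod n, q ≠ 0 → 0 ≤ b q)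
    (hb_sum : ∑ q : ZMod n, b q ≤ (m : ℤ)) :
    rhoTil n (Rtil n m ℓ (rhoTil n (a, b))) = Rtil n ℓ m (a, b) := by
  set w := gammaInv n ℓ a with hw
  set x := gammaInv n m b with hx
  have hA : gammaInv n ℓ (iotaMap n a) = fun i => w (2 - i) := gammaInv_iota n ℓ a
  have hB : gammaInv n m (iotaMap n b) = fun i => x (2 - i) := gammaInv_iota n m b
  have hK : ∀ i : ZMod n,
      Kfun n (fun t => x (2 - t)) (fun t => w (2 - t)) i = Kfun n w x (3 - i) :=
    Kfun_reflect n w x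
  unfold rhoTil Rtil Rmat
  simp only [hA, hB, hK]
  refine Prod.ext ?_ ?_ <;> funext q <;>
    simp only [iotaMap, gammaMap, neg_eq_zero, hK] <;>
    by_cases hq : q = 0 <;> simp only [hq, if_pos rfl, if_neg, hq, if_true] <;>
    first
      | rfl
      | (simp only [if_false, ← hw, ← hx]
         have e1 : (2 : ZMod n) - (-q + 1) = q + 1 := by ring
         have e2 : (3 : ZMod n) - (-q + 1 + 1) = q + 1 := by ring
         have e3 : (3 : ZMod n) - (-q + 1) = q + 1 + 1 := by ring
         rw [e1, e2, e3])
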